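/- For every c > 1, every m > 0 and every t ≥ 0, one has t⁴/(8m(t² + m²)) · (1/c²) ≤ t²/(2m) − (√(c²t² + m²c⁴) − mc²) ≤ t⁴/(8m³) · (1/c²). -/

import Mathlib

open Real

/-- Scalar form of the two-sided comparison between the nonrelativistic symbol
`t²/(2m)` and the pseudo-relativistic symbol `√(c²t² + m²c⁴) − mc²`, for `c > 1`. -/
theorem kinetic_symbol_two_sided_bound (c m t : ℝ) (hc : 1 < c) (hm : 0 < m)
    (ht : 0 ≤ t) :
    t ^ 4 / (8 * m * (t ^ 2 + m ^ 2)) * (1 / c ^ 2) ≤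
        t ^ 2 / (2 * m) - (Real.sqrt (c ^ 2 * t ^ 2 + m ^ 2 * c ^ 4) - m * c ^ 2) ∧
      t ^ 2 / (2 * m) - (Real.sqrt (c ^ 2 * t ^ 2 + m ^ 2 * c ^ 4) - m * c ^ 2) ≤
        t ^ 4 / (8 * m ^ 3) * (1 / c ^ 2) := by
  have hc0 : (0:ℝ) < c := lt_trans one_pos hc
  set s := Real.sqrt (c ^ 2 * t ^ 2 + m ^ 2 * c ^ 4) with hsdef
  have hnn : (0:ℝ) ≤ c ^ 2 * t ^ 2 + m ^ 2 * c ^ 4 := by positivity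
  have hs2 : s ^ 2 = c ^ 2 * t ^ 2 + m ^ 2 * c ^ 4 := Real.sq_sqrt hnn
  have hs0 : 0 ≤ s := Real.sqrt_nonneg _
  have hsl : m * c ^ 2 ≤ s := by nlinarith
  have hspos : 0 < s + m * c ^ 2 := by positivity
  have hDeq : t ^ 2 / (2 * m) - (s - m * c ^ 2)
      = c ^ 2 * t ^ 4 / (2 * m * (s + m * c ^ 2) ^ 2) := by
    have h2m : (2:ℝ) * m ≠ 0 := by positivity
    field_simp
    ring_nf
    linear_combination (t ^ 2 - 2 * m * s - 2 * m ^ 2 * c ^ 2) * hs2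
  rw [hDeq]
  constructor
  · rw [mul_one_div, div_div, div_le_div_iff₀ (by positivity) (by positivity)]
    have hc2 : (1:ℝ) ≤ c ^ 2 := by nlinarith
    have hkey : (s + m * c ^ 2) ^ 2 ≤ 4 * c ^ 4 * (t ^ 2 + m ^ 2) := by
      nlinarith [sq_nonneg (s - m * c ^ 2), hs2, mul_nonneg (sub_nonneg.2 hc2) (sq_nonneg t),
        sq_nonneg c, sq_nonneg t, sq_nonneg (c * t), sq_nonneg (c * m)]
    nlinarith [mul_nonneg (mul_nonneg hm.le (pow_nonneg ht 4)) (sub_nonneg.2 hkey)]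
  · rw [mul_one_div, div_div, div_le_div_iff₀ (by positivity) (by positivity)]
    nlinarith [mul_nonneg (mul_nonneg hm.le (pow_nonneg ht 4))
      (mul_nonneg (sub_nonneg.2 hsl) (by positivity : (0:ℝ) ≤ s + 3 * m * c ^ 2))]
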